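/- Let λ = 1/(e−1). For all real numbers s, k ∈ [0,1] with 0 < s + k ≤ 1, 1 − (λ·s·k + (1/e)·(1−λ)·k)/(s+k) ≥ 1 − 1/e + 1/e²; moreover equality holds at s = 1/e and k = 1 − 1/e. That is, the minimum of 1 − (λ·s·k + (1/e)·(1−λ)·k)/(s+k) over {(s,k) ∈ [0,1]² : 0 < s+k ≤ 1} equals 1 − 1/e + 1/e² ≈ 0.7674. -/

import Mathlib

private lemma key_ineq (s k : ℝ) (hs0 : 0 ≤ s) (_hs1 : s ≤ 1) (hk0 : 0 ≤ k)
    (_hk1 : k ≤ 1) (hpos : 0 < s + k) (hsum : s + k ≤ 1) :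
    1 - ((1 / (Real.exp 1 - 1)) * s * k +
        (1 / Real.exp 1) * (1 - 1 / (Real.exp 1 - 1)) * k) / (s + k) ≥
      1 - 1 / Real.exp 1 + 1 / Real.exp 1 ^ 2 := by
  set E := Real.exp 1 with hEdef
  have hE : (2:ℝ) < E := by
    have := Real.exp_one_gt_d9; rw [hEdef]; linarith
  have hE0 : (0:ℝ) < E := by linarith
  have hE1 : (0:ℝ) < E - 1 := by linarith
  have hT : 0 ≤ (E - 1)^2 * s + k - E^2 * s * k := by
    rcases eq_or_lt_of_le _hs1 with h | h
    · have hk : k = 0 := by linarith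
      subst hk
      nlinarith [sq_nonneg (E - 1)]
    · have h1 : (0:ℝ) < 1 - s := by linarith
      have h2 : 0 ≤ (1 - s - k) * s * (E - 1)^2 + k * (E * s - 1)^2 := by
        have : (0:ℝ) ≤ 1 - s - k := by linarith
        positivity
      have h3 : (1 - s) * ((E - 1)^2 * s + k - E^2 * s * k)
          = (1 - s - k) * s * (E - 1)^2 + k * (E * s - 1)^2 := by ring
      exact (mul_nonneg_iff_of_pos_left h1).mp (by rw [h3]; exact h2)
  have hmain : ((1 / (E - 1)) * s * k + (1 / E) * (1 - 1 / (E - 1)) * k) / (s + k)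
      ≤ 1 / E - 1 / E ^ 2 := by
    rw [div_le_iff₀ hpos]
    have h2 : (0:ℝ) < E ^ 2 * (E - 1) := by positivity
    rw [← sub_nonneg]
    have hrewrite : (1 / E - 1 / E ^ 2) * (s + k) -
        ((1 / (E - 1)) * s * k + (1 / E) * (1 - 1 / (E - 1)) * k)
        = ((E - 1)^2 * s + k - E^2 * s * k) / (E ^ 2 * (E - 1)) := by
      field_simp
      ring
    rw [hrewrite]
    positivity
  linarith

theorem factor_revealing_unweighted_value :
    (∀ s k : ℝ, 0 ≤ s → s ≤ 1 → 0 ≤ k → k ≤ 1 → 0 < s + k → s + k ≤ 1 →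
      1 - ((1 / (Real.exp 1 - 1)) * s * k +
          (1 / Real.exp 1) * (1 - 1 / (Real.exp 1 - 1)) * k) / (s + k) ≥
        1 - 1 / Real.exp 1 + 1 / Real.exp 1 ^ 2) ∧
    (1 - ((1 / (Real.exp 1 - 1)) * (1 / Real.exp 1) * (1 - 1 / Real.exp 1) +
          (1 / Real.exp 1) * (1 - 1 / (Real.exp 1 - 1)) * (1 - 1 / Real.exp 1)) /
          (1 / Real.exp 1 + (1 - 1 / Real.exp 1)) =
      1 - 1 / Real.exp 1 + 1 / Real.exp 1 ^ 2) ∧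
    IsLeast
      {r : ℝ | ∃ s k : ℝ, 0 ≤ s ∧ s ≤ 1 ∧ 0 ≤ k ∧ k ≤ 1 ∧ 0 < s + k ∧ s + k ≤ 1 ∧
        r = 1 - ((1 / (Real.exp 1 - 1)) * s * k +
          (1 / Real.exp 1) * (1 - 1 / (Real.exp 1 - 1)) * k) / (s + k)}
      (1 - 1 / Real.exp 1 + 1 / Real.exp 1 ^ 2) := by
  have hE : (2:ℝ) < Real.exp 1 := by
    have := Real.exp_one_gt_d9; linarith
  have hE0 : Real.exp 1 ≠ 0 := by positivity
  have hE1 : Real.exp 1 - 1 ≠ 0 := by intro h; linarith [sub_eq_zero.mp h]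
  have heq : 1 - ((1 / (Real.exp 1 - 1)) * (1 / Real.exp 1) * (1 - 1 / Real.exp 1) +
          (1 / Real.exp 1) * (1 - 1 / (Real.exp 1 - 1)) * (1 - 1 / Real.exp 1)) /
          (1 / Real.exp 1 + (1 - 1 / Real.exp 1)) =
      1 - 1 / Real.exp 1 + 1 / Real.exp 1 ^ 2 := by
    generalize hEv : Real.exp 1 = E at hE0 hE1 ⊢
    field_simp
    linear_combination (1 - E) * mul_inv_cancel₀ hE0
  refine ⟨fun s k hs0 hs1 hk0 hk1 hpos hsum => key_ineq s k hs0 hs1 hk0 hk1 hpos hsum,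
    heq, ⟨⟨1 / Real.exp 1, 1 - 1 / Real.exp 1, ?_, ?_, ?_, ?_, ?_, ?_, heq.symm⟩, ?_⟩⟩
  · positivity
  · rw [div_le_one (by positivity)]; linarith
  · have : 1 / Real.exp 1 < 1 := by rw [div_lt_one (by positivity)]; linarith
    linarith
  · have : 0 < 1 / Real.exp 1 := by positivity
    linarith
  · linarith
  · linarith
  · rintro r ⟨s, k, hs0, hs1, hk0, hk1, hpos, hsum, rfl⟩
    exact key_ineq s k hs0 hs1 hk0 hk1 hpos hsum
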